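/- In the network formation game on n ≥ 3 nodes with utility u_i = −(s/n + l·Ed_i + r·Eb_i + m·deg(i)), if m < l/n then the complete directed graph (each node links to every other node) is the unique pure Nash equilibrium. -/

import Mathlib

open scoped ENNReal
/-- A walk of length `k` from `i` to `j` in the directed graph whose
out-neighborhoods are given by `g`. -/
def netWalk {n : ℕ} (g : Fin n → Finset (Fin n)) (i j : Fin n) (k : ℕ) : Prop :=
  ∃ f : ℕ → Fin n, f 0 = i ∧ f k = j ∧ ∀ m < k, f (m + 1) ∈ g (f m)

/-- Shortest-path (hop-count) distance from `i` to `j`; `⊤` if `j` is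
unreachable from `i`. -/
noncomputable def netDist {n : ℕ} (g : Fin n → Finset (Fin n)) (i j : Fin n) : ℕ∞ :=
  ⨅ (k : ℕ) (_ : netWalk g i j k), (k : ℕ∞)

/-- Expected (hop-count) distance `Ed_i` from node `i` to a uniformly random
node, as an extended real (`⊤` if some node is unreachable from `i`). -/
noncomputable def netEd {n : ℕ} (g : Fin n → Finset (Fin n)) (i : Fin n) : EReal :=
  (((n:ℝ)⁻¹ : ℝ) : EReal) * ∑ j, ((netDist g i j : ℝ≥0∞) : EReal)

/-- Utility of node `i`: `u_i = -(s/n + l·Ed_i + r·Eb_i + m·deg(i))`, taking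
the value `⊥` (i.e. `-∞`) when some node is unreachable from `i`. -/
noncomputable def netU {n : ℕ} (s l r m : ℝ)
    (Eb : (Fin n → Finset (Fin n)) → Fin n → ℝ)
    (g : Fin n → Finset (Fin n)) (i : Fin n) : EReal :=
  -(((s / n + r * Eb g i + m * (g i).card : ℝ) : EReal) + ((l : ℝ) : EReal) * netEd g i)

/-- Pure Nash equilibrium of the network formation game: no node can strictly
increase its utility by unilaterally changing its set of outgoing links. -/
def netNash {n : ℕ} (s l r m : ℝ)
    (Eb : (Fin n → Finset (Fin n)) → Fin n → ℝ)
    (g : Fin n → Finset (Fin n)) : Prop :=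
  ∀ i : Fin n, ∀ T : Finset (Fin n), i ∉ T →
    netU s l r m Eb (Function.update g i T) i ≤ netU s l r m Eb g i

lemma netWalk_zero {n : ℕ} {g : Fin n → Finset (Fin n)} {i j : Fin n}
    (h : netWalk g i j 0) : i = j := by
  obtain ⟨f, h0, hk, -⟩ := h; rw [← h0, ← hk]

lemma netWalk_one {n : ℕ} {g : Fin n → Finset (Fin n)} {i j : Fin n}
    (h : netWalk g i j 1) : j ∈ g i := by
  obtain ⟨f, h0, hk, hs⟩ := h
  have := hs 0 one_pos
  rw [h0] at this; rw [← hk]; exact this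

lemma netDist_self {n : ℕ} (g : Fin n → Finset (Fin n)) (i : Fin n) :
    netDist g i i = 0 := by
  refine le_antisymm ?_ zero_le
  have hw : netWalk g i i 0 := ⟨fun _ => i, rfl, rfl, fun m hm => by omega⟩
  have := iInf₂_le (f := fun (k:ℕ) (_ : netWalk g i i k) => (k:ℕ∞)) 0 hw
  simpa [netDist] using this

lemma netDist_le_one {n : ℕ} {g : Fin n → Finset (Fin n)} {i j : Fin n}
    (h : j ∈ g i) : netDist g i j ≤ 1 := by
  have hw : netWalk g i j 1 := by
    refine ⟨fun k => if k = 0 then i else j, by simp, by simp, ?_⟩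
    intro m hm
    interval_cases m
    simpa using h
  have := iInf₂_le (f := fun (k:ℕ) (_ : netWalk g i j k) => (k:ℕ∞)) 1 hw
  simpa [netDist] using this

lemma one_le_netDist {n : ℕ} {g : Fin n → Finset (Fin n)} {i j : Fin n}
    (h : j ≠ i) : 1 ≤ netDist g i j := by
  refine le_iInf₂ fun k hk => ?_
  rcases Nat.eq_zero_or_pos k with rfl | hpos
  · exact absurd (netWalk_zero hk) (Ne.symm h)
  · exact_mod_cast hpos

lemma two_le_netDist {n : ℕ} {g : Fin n → Finset (Fin n)} {i j : Fin n}
    (h : j ≠ i) (h2 : j ∉ g i) : 2 ≤ netDist g i j := by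
  refine le_iInf₂ fun k hk => ?_
  match k with
  | 0 => exact absurd (netWalk_zero hk) (Ne.symm h)
  | 1 => exact absurd (netWalk_one hk) h2
  | (k+2) =>
    have h2k : (2:ℕ) ≤ k + 2 := by omega
    exact_mod_cast h2k

lemma netEd_eq {n : ℕ} (g : Fin n → Finset (Fin n)) (i : Fin n) :
    netEd g i = (((n:ℝ)⁻¹ : ℝ) : EReal) *
      (((∑ j, (netDist g i j : ℝ≥0∞)) : ℝ≥0∞) : EReal) := by
  unfold netEd
  congr 1
  induction (Finset.univ : Finset (Fin n)) using Finset.induction with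
  | empty => simp
  | insert _ _ h ih => rw [Finset.sum_insert h, Finset.sum_insert h, ih, EReal.coe_ennreal_add]

/-- Distance sum in a graph whose `i`-th out-neighborhood is complete. -/

lemma sum_dist_complete {n : ℕ} (g : Fin n → Finset (Fin n)) (i : Fin n)
    (h : g i = Finset.univ.erase i) :
    ∑ j, ((netDist g i j : ℕ∞) : ℝ≥0∞) = ((n - 1 : ℕ) : ℝ≥0∞) := by
  have key : ∀ j, ((netDist g i j : ℕ∞) : ℝ≥0∞) = if j = i then 0 else 1 := by
    intro j
    by_cases hj : j = i
    · subst hj; simp [netDist_self]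
    · have h1 : netDist g i j ≤ 1 := netDist_le_one (by simp [h, hj])
      have h2 : (1:ℕ∞) ≤ netDist g i j := one_le_netDist hj
      have : netDist g i j = 1 := le_antisymm h1 h2
      simp [hj, this]
  rw [Finset.sum_congr rfl fun j _ => key j]
  rw [← Finset.sum_erase_add _ _ (Finset.mem_univ i),
    Finset.sum_congr rfl (fun j hj => if_neg (Finset.mem_erase.mp hj).1)]
  simp [Finset.card_erase_of_mem]

/-- Lower bound on the distance sum. -/

lemma sum_dist_lb {n : ℕ} (g : Fin n → Finset (Fin n)) (i : Fin n) (hi : i ∉ g i) :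
    (((g i).card + 2 * (n - 1 - (g i).card) : ℕ) : ℝ≥0∞) ≤
      ∑ j, ((netDist g i j : ℕ∞) : ℝ≥0∞) := by
  have hsub : g i ⊆ Finset.univ.erase i := fun j hj =>
    Finset.mem_erase.mpr ⟨fun hji => hi (hji ▸ hj), Finset.mem_univ j⟩
  have hstep : ∑ j ∈ Finset.univ.erase i, ((netDist g i j : ℕ∞) : ℝ≥0∞) ≤
      ∑ j, ((netDist g i j : ℕ∞) : ℝ≥0∞) :=
    Finset.sum_le_sum_of_subset (Finset.erase_subset _ _)
  refine le_trans ?_ hstep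
  rw [← Finset.sum_sdiff hsub]
  have hb1 : ((g i).card : ℝ≥0∞) ≤ ∑ j ∈ g i, ((netDist g i j : ℕ∞) : ℝ≥0∞) := by
    calc ((g i).card : ℝ≥0∞) = ∑ _j ∈ g i, 1 := by simp
    _ ≤ _ := Finset.sum_le_sum fun j hj => by
        have : (1:ℕ∞) ≤ netDist g i j :=
          one_le_netDist (fun hji => hi (hji ▸ hj))
        exact_mod_cast this
  have hcard2 : (Finset.univ.erase i \ g i).card = n - 1 - (g i).card := by
    rw [Finset.card_sdiff_of_subset hsub, Finset.card_erase_of_mem (Finset.mem_univ i),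
      Finset.card_univ, Fintype.card_fin]
  have hb2 : ((2 * (n - 1 - (g i).card) : ℕ) : ℝ≥0∞) ≤
      ∑ j ∈ Finset.univ.erase i \ g i, ((netDist g i j : ℕ∞) : ℝ≥0∞) := by
    calc ((2 * (n - 1 - (g i).card) : ℕ) : ℝ≥0∞)
        = ∑ _j ∈ Finset.univ.erase i \ g i, 2 := by
          rw [Finset.sum_const, hcard2]; simp [mul_comm]
    _ ≤ _ := Finset.sum_le_sum fun j hj => by
        obtain ⟨hje, hjg⟩ := Finset.mem_sdiff.mp hj
        have : (2:ℕ∞) ≤ netDist g i j :=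
          two_le_netDist (Finset.mem_erase.mp hje).1 hjg
        exact_mod_cast this
  calc (((g i).card + 2 * (n - 1 - (g i).card) : ℕ) : ℝ≥0∞)
      = ((2 * (n - 1 - (g i).card) : ℕ) : ℝ≥0∞) + ((g i).card : ℝ≥0∞) := by
        push_cast; ring
  _ ≤ _ := add_le_add hb2 hb1

lemma coe_ennreal_toReal' {x : ℝ≥0∞} (hx : x ≠ ⊤) :
    ((x : EReal)) = ((x.toReal : ℝ) : EReal) := by
  rw [← EReal.coe_toReal (x := (x:EReal)) (by simpa using hx) (by
    intro hbot
    exact absurd (hbot ▸ EReal.coe_ennreal_nonneg x) (by simp)), EReal.toReal_coe_ennreal]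

lemma netU_le_of {n : ℕ} {s l r m : ℝ}
    {Eb : (Fin n → Finset (Fin n)) → Fin n → ℝ}
    {g : Fin n → Finset (Fin n)} {i : Fin n}
    (hn : 0 < n) (hl : 0 < l) (a : ℕ)
    (hD : (a : ℝ≥0∞) ≤ ∑ j, ((netDist g i j : ℕ∞) : ℝ≥0∞)) :
    netU s l r m Eb g i ≤
      -((s / n + r * Eb g i + m * (g i).card + l * ((n:ℝ)⁻¹ * a) : ℝ) : EReal) := by
  rw [netU, netEd_eq]
  set D := ∑ j, ((netDist g i j : ℕ∞) : ℝ≥0∞) with hDdef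
  rw [EReal.neg_le_neg_iff]
  rcases eq_or_ne D ⊤ with hT | hT
  · rw [hT, EReal.coe_ennreal_top,
      EReal.mul_top_of_pos (by exact_mod_cast (by positivity : (0:ℝ) < (n:ℝ)⁻¹)),
      EReal.mul_top_of_pos (by exact_mod_cast hl), EReal.coe_add_top]
    exact le_top
  · rw [coe_ennreal_toReal' hT]
    have haD : (a : ℝ) ≤ D.toReal := by
      have := (ENNReal.toReal_le_toReal (by simp) hT).mpr hD
      simpa using this
    norm_cast
    have := mul_le_mul_of_nonneg_left haD
      (by positivity : (0:ℝ) ≤ l * (n:ℝ)⁻¹)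
    nlinarith [this]

lemma le_netU_of {n : ℕ} {s l r m : ℝ}
    {Eb : (Fin n → Finset (Fin n)) → Fin n → ℝ}
    {g : Fin n → Finset (Fin n)} {i : Fin n}
    (hn : 0 < n) (hl : 0 < l) (a : ℕ)
    (hD : ∑ j, ((netDist g i j : ℕ∞) : ℝ≥0∞) ≤ (a : ℝ≥0∞)) :
    -((s / n + r * Eb g i + m * (g i).card + l * ((n:ℝ)⁻¹ * a) : ℝ) : EReal) ≤
      netU s l r m Eb g i := by
  rw [netU, netEd_eq]
  set D := ∑ j, ((netDist g i j : ℕ∞) : ℝ≥0∞) with hDdef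
  rw [EReal.neg_le_neg_iff]
  have hT : D ≠ ⊤ := fun h => by simp [h] at hD
  rw [coe_ennreal_toReal' hT]
  have haD : D.toReal ≤ (a : ℝ) := by
    have := (ENNReal.toReal_le_toReal hT (by simp)).mpr hD
    simpa using this
  norm_cast
  have := mul_le_mul_of_nonneg_left haD
    (by positivity : (0:ℝ) ≤ l * (n:ℝ)⁻¹)
  nlinarith [this]

/-- If link maintenance is cheap (`m < l/n`), the complete directed graph is
the unique pure Nash equilibrium of the network formation game (assuming, as
in the paper's analysis, that a node's routing burden `Eb_i` is unaffected by
its own link choices). -/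
theorem network_complete_unique_nash (n : ℕ) (hn : 3 ≤ n) (s l r m : ℝ)
    (hs : 0 < s) (hl : 0 < l) (hr : 0 < r) (hm : 0 < m) (hml : m < l / n)
    (Eb : (Fin n → Finset (Fin n)) → Fin n → ℝ)
    (hEb : ∀ g (i : Fin n) (T : Finset (Fin n)), Eb (Function.update g i T) i = Eb g i) :
    ∀ g : Fin n → Finset (Fin n), (∀ i, i ∉ g i) →
      (netNash s l r m Eb g ↔ ∀ i, g i = Finset.univ.erase i) := by
  intro g hg
  have hn0 : 0 < n := by omega
  have hnR : (0:ℝ) < n := by exact_mod_cast hn0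
  have hml' : m < l * (n:ℝ)⁻¹ := by rwa [div_eq_mul_inv] at hml
  have hinv : (0:ℝ) < (n:ℝ)⁻¹ := by positivity
  have hcast1 : ((n - 1 : ℕ) : ℝ) = (n:ℝ) - 1 := by
    have h1 : 1 ≤ n := by omega
    push_cast [Nat.cast_sub h1]; ring
  have hcast2 : ∀ c : ℕ, c ≤ n - 1 →
      ((c + 2 * (n - 1 - c) : ℕ) : ℝ) = (c:ℝ) + 2 * ((n:ℝ) - 1 - c) := by
    intro c hc
    have h1 : 1 ≤ n := by omega
    push_cast [Nat.cast_sub hc, Nat.cast_sub h1]; ring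
  constructor
  · -- Nash → complete
    intro hNash i
    by_contra hne
    have hsub : g i ⊆ Finset.univ.erase i := fun j hj =>
      Finset.mem_erase.mpr ⟨fun hji => hg i (hji ▸ hj), Finset.mem_univ j⟩
    have hss : g i ⊂ Finset.univ.erase i := hsub.ssubset_of_ne hne
    have hclt : (g i).card < n - 1 := by
      have := Finset.card_lt_card hss
      simpa [Finset.card_erase_of_mem, Finset.card_univ] using this
    set c := (g i).card with hc
    set T := Finset.univ.erase i with hT
    have hiT : i ∉ T := by simp [hT]
    set g' := Function.update g i T with hg'
    have hupd : g' i = T := Function.update_self i T g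
    have hnash := hNash i T hiT
    -- lower bound for the deviation's utility
    have hDg' : ∑ j, ((netDist g' i j : ℕ∞) : ℝ≥0∞) ≤ ((n - 1 : ℕ) : ℝ≥0∞) :=
      le_of_eq (sum_dist_complete g' i hupd)
    have hA := le_netU_of (s := s) (l := l) (r := r) (m := m) (Eb := Eb)
      hn0 hl (n - 1) hDg'
    rw [hupd, hEb g i T] at hA
    have hcardT : (T.card : ℝ) = ((n - 1 : ℕ) : ℝ) := by
      rw [hT]; norm_cast
      simp [Finset.card_erase_of_mem, Finset.card_univ]
    rw [hcardT] at hA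
    -- upper bound for the current utility
    have hDg := sum_dist_lb g i (hg i)
    have hB := netU_le_of (s := s) (l := l) (r := r) (m := m) (Eb := Eb)
      hn0 hl (c + 2 * (n - 1 - c)) hDg
    -- combine
    have hchain : -(((s / n + r * Eb g i + m * ((n-1:ℕ):ℝ)
          + l * ((n:ℝ)⁻¹ * ((n-1:ℕ):ℝ)) : ℝ)) : EReal) ≤
        -(((s / n + r * Eb g i + m * (c:ℝ)
          + l * ((n:ℝ)⁻¹ * ((c + 2 * (n - 1 - c) : ℕ):ℝ)) : ℝ)) : EReal) :=
      le_trans hA (le_trans hnash hB)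
    rw [EReal.neg_le_neg_iff, EReal.coe_le_coe_iff] at hchain
    rw [hcast1, hcast2 c (by omega)] at hchain
    have hcR : (c:ℝ) ≤ (n:ℝ) - 1 - 1 := by
      have : c ≤ n - 2 := by omega
      have h2 : ((n - 2 : ℕ):ℝ) = (n:ℝ) - 2 := by
        push_cast [Nat.cast_sub (by omega : 2 ≤ n)]; ring
      have := (Nat.cast_le (α := ℝ)).mpr this
      linarith [h2 ▸ this]
    nlinarith [hchain, hcR, hml', mul_le_mul_of_nonneg_left hcR (le_of_lt hl)]
  · -- complete → Nash
    intro hcomp i T hiT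
    set g' := Function.update g i T with hg'
    have hupd : g' i = T := Function.update_self i T g
    have hTsub : T ⊆ Finset.univ.erase i := fun j hj =>
      Finset.mem_erase.mpr ⟨fun hji => hiT (hji ▸ hj), Finset.mem_univ j⟩
    have hcT : T.card ≤ n - 1 := by
      have := Finset.card_le_card hTsub
      simpa [Finset.card_erase_of_mem, Finset.card_univ] using this
    -- upper bound for the deviation
    have hDg' : ((T.card + 2 * (n - 1 - T.card) : ℕ) : ℝ≥0∞) ≤
        ∑ j, ((netDist g' i j : ℕ∞) : ℝ≥0∞) := by
      have := sum_dist_lb g' i (by rw [hupd]; exact hiT)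
      rwa [hupd] at this
    have hB := netU_le_of (s := s) (l := l) (r := r) (m := m) (Eb := Eb)
      hn0 hl (T.card + 2 * (n - 1 - T.card)) hDg'
    rw [hupd, hEb g i T] at hB
    -- lower bound for the current (complete) utility
    have hDg : ∑ j, ((netDist g i j : ℕ∞) : ℝ≥0∞) ≤ ((n - 1 : ℕ) : ℝ≥0∞) :=
      le_of_eq (sum_dist_complete g i (hcomp i))
    have hA := le_netU_of (s := s) (l := l) (r := r) (m := m) (Eb := Eb)
      hn0 hl (n - 1) hDg
    have hcardg : ((g i).card : ℝ) = ((n - 1 : ℕ) : ℝ) := by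
      rw [hcomp i]; norm_cast
      simp [Finset.card_erase_of_mem, Finset.card_univ]
    rw [hcardg] at hA
    refine le_trans hB (le_trans ?_ hA)
    rw [EReal.neg_le_neg_iff, EReal.coe_le_coe_iff]
    rw [hcast1, hcast2 T.card hcT]
    have hcR : (T.card:ℝ) ≤ (n:ℝ) - 1 := by
      have := (Nat.cast_le (α := ℝ)).mpr hcT
      linarith [hcast1 ▸ this]
    nlinarith [hcR, hml', mul_le_mul_of_nonneg_left hcR (le_of_lt hl)]
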